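/- For fixed complex numbers b and c, the ratio a^(c-b) * Γ(a+b) / Γ(a+c) tends to 1 as the complex number a tends to infinity with |arg(a)| < π (e.g. along any fixed ray avoiding the negative real axis). -/

import Mathlib

open Filter Complex

private lemma sum_inv_sq_le (ρ : ℝ) (hρ : 2 ≤ ρ) (n : ℕ) :
    ∑ j ∈ Finset.range n, ((ρ + j)^2)⁻¹ ≤ (ρ - 1)⁻¹ - (ρ - 1 + n)⁻¹ := by
  induction n with
  | zero => simp
  | succ n ih =>
    rw [Finset.sum_range_succ]
    have hn : (0:ℝ) ≤ (n:ℝ) := n.cast_nonneg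
    have h1 : (0:ℝ) < ρ - 1 + n := by linarith
    have h2 : (0:ℝ) < ρ + n := by linarith
    have h3 : ((ρ + (n:ℝ))^2)⁻¹ ≤ (ρ - 1 + n)⁻¹ - (ρ + n)⁻¹ := by
      have he : (ρ - 1 + (n:ℝ))⁻¹ - (ρ + n)⁻¹ = ((ρ - 1 + n) * (ρ + n))⁻¹ := by
        field_simp
        ring
      rw [he]
      apply inv_anti₀ (by positivity)
      nlinarith
    have h4 : ρ - 1 + ((n:ℝ) + 1) = ρ + n := by ring
    push_cast
    rw [h4]
    push_cast at ih
    linarith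

private lemma norm_log_one_add_sub_self (x : ℂ) (hx : ‖x‖ ≤ 1/2) :
    ‖Complex.log (1+x) - x‖ ≤ ‖x‖^2 := by
  have h1 := Complex.norm_log_one_add_sub_self_le (lt_of_le_of_lt hx (by norm_num))
  have h2 : (1 - ‖x‖)⁻¹ ≤ 2 := by
    rw [inv_le_comm₀ (by linarith) (by norm_num)]
    linarith
  calc ‖Complex.log (1+x) - x‖ ≤ ‖x‖^2 * (1 - ‖x‖)⁻¹ / 2 := h1
    _ ≤ ‖x‖^2 * 2 / 2 := by gcongr
    _ = ‖x‖^2 := by ring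

private lemma log_succ_sub_log (z : ℂ) (hz : 2 ≤ ‖z‖) :
    Complex.log (z + 1) - Complex.log z = Complex.log (1 + z⁻¹) := by
  have hz0 : z ≠ 0 := by
    intro h; rw [h] at hz; norm_num at hz
  have hz1 : z + 1 ≠ 0 := by
    intro h
    have h' : z = -1 := by linear_combination h
    rw [h'] at hz; norm_num at hz
  have he : 1 + z⁻¹ = (z + 1) / z := by field_simp
  have h1z : (1 : ℂ) + z⁻¹ ≠ 0 := by rw [he]; exact div_ne_zero hz1 hz0
  have hexp : Complex.exp (Complex.log (z+1) - Complex.log z)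
      = Complex.exp (Complex.log (1 + z⁻¹)) := by
    rw [Complex.exp_sub, Complex.exp_log hz1, Complex.exp_log hz0, Complex.exp_log h1z, he]
  obtain ⟨k, hk⟩ := Complex.exp_eq_exp_iff_exists_int.mp hexp
  have hinv : ‖z⁻¹‖ ≤ 1/2 := by
    rw [norm_inv, inv_le_comm₀ (by linarith) (by norm_num)]
    linarith
  have hre : 0 ≤ (1 + z⁻¹).re := by
    have h1 := abs_le.mp (Complex.abs_re_le_norm z⁻¹)
    simp only [Complex.add_re, Complex.one_re]
    have : -(1/2 : ℝ) ≤ (z⁻¹).re := by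
      have := h1.1
      linarith
    linarith
  have harg1 : |Complex.arg (1 + z⁻¹)| ≤ Real.pi / 2 :=
    Complex.abs_arg_le_pi_div_two_iff.mpr hre
  have him : (z + 1).im = z.im := by simp
  have harg2 : |Complex.arg (z+1) - Complex.arg z| ≤ Real.pi := by
    rcases le_or_gt 0 z.im with h | h
    · have a1 : 0 ≤ Complex.arg (z+1) := Complex.arg_nonneg_iff.mpr (by rw [him]; exact h)
      have a2 : 0 ≤ Complex.arg z := Complex.arg_nonneg_iff.mpr h
      have a3 := Complex.arg_le_pi (z+1)
      have a4 := Complex.arg_le_pi z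
      rw [abs_le]; constructor <;> linarith
    · have a1 : Complex.arg (z+1) < 0 := Complex.arg_neg_iff.mpr (by rw [him]; exact h)
      have a2 : Complex.arg z < 0 := Complex.arg_neg_iff.mpr h
      have a3 := Complex.neg_pi_lt_arg (z+1)
      have a4 := Complex.neg_pi_lt_arg z
      rw [abs_le]; constructor <;> linarith
  have hkim : Complex.arg (z+1) - Complex.arg z
      = Complex.arg (1 + z⁻¹) + (k:ℝ) * (2 * Real.pi) := by
    have := congrArg Complex.im hk
    simpa [Complex.sub_im, Complex.add_im, Complex.log_im, Complex.mul_im, Complex.mul_re]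
      using this
  have hk0 : k = 0 := by
    have hpi := Real.pi_pos
    have h2 : |(k:ℝ) * (2 * Real.pi)| ≤ Real.pi + Real.pi / 2 := by
      have e1 : (k:ℝ) * (2 * Real.pi)
          = (Complex.arg (z+1) - Complex.arg z) - Complex.arg (1 + z⁻¹) := by
        linarith [hkim]
      rw [e1]
      calc |(Complex.arg (z+1) - Complex.arg z) - Complex.arg (1 + z⁻¹)|
          ≤ |Complex.arg (z+1) - Complex.arg z| + |Complex.arg (1 + z⁻¹)| := abs_sub _ _
        _ ≤ Real.pi + Real.pi / 2 := add_le_add harg2 harg1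
    rw [abs_mul, abs_of_pos (by positivity : (0:ℝ) < 2 * Real.pi)] at h2
    have habs : |(k:ℝ)| < 1 := by nlinarith [abs_nonneg ((k:ℝ))]
    have h3 : |k| < 1 := by exact_mod_cast habs
    have := abs_lt.mp h3
    omega
  rw [hk0] at hk
  simpa using hk

private lemma gamma_ratio_eq_exp (w z : ℂ) (m ρ : ℝ) (hm0 : 0 < m)
    (hρ : 2 ≤ ρ) (hw : 2 * ‖w‖ + 2 ≤ m * ρ)
    (hlin : ∀ j : ℕ, m * (ρ + j) ≤ ‖z + (j:ℂ)‖) :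
    ‖∑' j : ℕ, (Complex.log (1 + w / (z + j))
        - w * (Complex.log (z + j + 1) - Complex.log (z + j)))‖
      ≤ (‖w‖^2 + ‖w‖) / (m^2 * (ρ - 1)) ∧
    Complex.Gamma z / Complex.Gamma (z + w) =
      Complex.exp (-(w * Complex.log z) + ∑' j : ℕ, (Complex.log (1 + w / (z + j))
        - w * (Complex.log (z + j + 1) - Complex.log (z + j)))) := by
  have hwn : (0:ℝ) ≤ ‖w‖ := norm_nonneg w
  set d : ℕ → ℂ := fun j => Complex.log (1 + w / (z + j))
      - w * (Complex.log (z + j + 1) - Complex.log (z + j)) with hd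
  -- basic per-j facts
  have hmρj : ∀ j : ℕ, 2 * ‖w‖ + 2 ≤ m * (ρ + j) := fun j => by
    have : m * ρ ≤ m * (ρ + j) := by
      apply mul_le_mul_of_nonneg_left _ hm0.le
      linarith [j.cast_nonneg (α := ℝ)]
    linarith
  have hbig : ∀ j : ℕ, 2 * ‖w‖ + 2 ≤ ‖z + (j:ℂ)‖ := fun j => (hmρj j).trans (hlin j)
  have h2 : ∀ j : ℕ, 2 ≤ ‖z + (j:ℂ)‖ := fun j => by linarith [hbig j]
  have hnz : ∀ j : ℕ, z + (j:ℂ) ≠ 0 := fun j => by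
    intro h; have := h2 j; rw [h] at this; norm_num at this
  have hzwj : ∀ j : ℕ, z + w + (j:ℂ) ≠ 0 := fun j => by
    intro h
    have h1 : ‖z + (j:ℂ)‖ - ‖w‖ ≤ ‖z + w + (j:ℂ)‖ := by
      have : ‖z + (j:ℂ)‖ ≤ ‖z + w + (j:ℂ)‖ + ‖w‖ := by
        calc ‖z + (j:ℂ)‖ = ‖(z + w + j) - w‖ := by congr 1; ring
          _ ≤ ‖z + w + (j:ℂ)‖ + ‖w‖ := norm_sub_le _ _
      linarith
    rw [h, norm_zero] at h1; linarith [hbig j]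
  -- the quadratic bound on d j
  have hdb : ∀ j : ℕ, ‖d j‖ ≤ (‖w‖^2 + ‖w‖) / m^2 * ((ρ + j)^2)⁻¹ := by
    intro j
    have hinv : ‖(z + (j:ℂ))⁻¹‖ ≤ 1/2 := by
      rw [norm_inv, inv_le_comm₀ (by linarith [h2 j]) (by norm_num)]
      linarith [h2 j]
    have hwq : ‖w / (z + j)‖ ≤ 1/2 := by
      rw [norm_div, div_le_iff₀ (by linarith [h2 j])]
      linarith [hbig j]
    have hrw : d j = (Complex.log (1 + w / (z + j)) - w / (z + j))
        - w * (Complex.log (1 + (z + (j:ℂ))⁻¹) - (z + (j:ℂ))⁻¹) := by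
      rw [hd]
      simp only []
      rw [← log_succ_sub_log (z + j) (h2 j)]
      field_simp
      ring
    have b1 := norm_log_one_add_sub_self _ hwq
    have b2 := norm_log_one_add_sub_self _ hinv
    have hnormj : m * (ρ + j) ≤ ‖z + (j:ℂ)‖ := hlin j
    have hρj : (0:ℝ) < ρ + j := by linarith [j.cast_nonneg (α := ℝ), hρ]
    have hden : (0:ℝ) < ‖z + (j:ℂ)‖ := by linarith [h2 j]
    calc ‖d j‖ ≤ ‖Complex.log (1 + w / (z + j)) - w / (z + j)‖
          + ‖w‖ * ‖Complex.log (1 + (z + (j:ℂ))⁻¹) - (z + (j:ℂ))⁻¹‖ := by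
          rw [hrw]
          refine (norm_sub_le _ _).trans ?_
          rw [norm_mul]
      _ ≤ ‖w / (z + j)‖^2 + ‖w‖ * ‖(z + (j:ℂ))⁻¹‖^2 := by
          gcongr
      _ = (‖w‖^2 + ‖w‖) * (‖z + (j:ℂ)‖^2)⁻¹ := by
          rw [norm_div, norm_inv]
          have hden' : ‖z + (j:ℂ)‖ ≠ 0 := by positivity
          field_simp
      _ ≤ (‖w‖^2 + ‖w‖) * ((m * (ρ + j))^2)⁻¹ := by
          have hmp : (0:ℝ) < m * (ρ + j) := by positivity
          gcongr
      _ = (‖w‖^2 + ‖w‖) / m^2 * ((ρ + j)^2)⁻¹ := by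
          rw [mul_pow, mul_inv, div_eq_mul_inv]
          ring
  set C : ℝ := (‖w‖^2 + ‖w‖) / m^2 with hC
  have hC0 : 0 ≤ C := by positivity
  have hsum_bound : ∀ n : ℕ, ∑ j ∈ Finset.range n, ‖d j‖ ≤ C * (ρ - 1)⁻¹ := by
    intro n
    calc ∑ j ∈ Finset.range n, ‖d j‖ ≤ ∑ j ∈ Finset.range n, C * ((ρ + j)^2)⁻¹ :=
          Finset.sum_le_sum fun j _ => hdb j
      _ = C * ∑ j ∈ Finset.range n, ((ρ + j)^2)⁻¹ := by rw [Finset.mul_sum]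
      _ ≤ C * ((ρ - 1)⁻¹ - (ρ - 1 + n)⁻¹) := by
          apply mul_le_mul_of_nonneg_left (sum_inv_sq_le ρ hρ n) hC0
      _ ≤ C * (ρ - 1)⁻¹ := by
          have : (0:ℝ) ≤ (ρ - 1 + n)⁻¹ := by
            apply inv_nonneg.mpr
            linarith [n.cast_nonneg (α := ℝ)]
          nlinarith
  have hsummable_norm : Summable fun j => ‖d j‖ :=
    summable_of_sum_range_le (fun n => norm_nonneg _) hsum_bound
  have hsummable : Summable d := hsummable_norm.of_norm
  constructor
  · calc ‖∑' j, d j‖ ≤ ∑' j, ‖d j‖ := norm_tsum_le_tsum_norm hsummable_norm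
      _ ≤ C * (ρ - 1)⁻¹ := Real.tsum_le_of_sum_range_le (fun n => norm_nonneg _) hsum_bound
      _ = (‖w‖^2 + ‖w‖) / (m^2 * (ρ - 1)) := by rw [hC]; field_simp
  · -- limit identification
    have hGne : Complex.Gamma (z + w) ≠ 0 := by
      apply Complex.Gamma_ne_zero
      intro n h
      exact hzwj n (by rw [h]; ring)
    have hP : Tendsto (fun n => Complex.GammaSeq z n / Complex.GammaSeq (z + w) n) atTop
        (nhds (Complex.Gamma z / Complex.Gamma (z + w))) :=
      (Complex.GammaSeq_tendsto_Gamma z).div (Complex.GammaSeq_tendsto_Gamma (z + w)) hGne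
    set g : ℕ → ℂ := fun n => -(w * (Real.log n : ℂ))
        + ∑ j ∈ Finset.range (n+1), Complex.log (1 + w / (z + j)) with hgdef
    have hgn : ∀ n : ℕ, g n = w * (Complex.log (z + n + 1) - (Real.log n : ℂ))
        + (-(w * Complex.log z) + ∑ j ∈ Finset.range (n+1), d j) := by
      intro n
      have htel : ∑ j ∈ Finset.range (n+1),
          (Complex.log (z + j + 1) - Complex.log (z + j))
          = Complex.log (z + n + 1) - Complex.log z := by
        have h := Finset.sum_range_sub (fun j : ℕ => Complex.log (z + j)) (n+1)
        simp only [Nat.cast_add, Nat.cast_one, ← add_assoc, Nat.cast_zero, add_zero] at h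
        exact h
      have hsum : ∑ j ∈ Finset.range (n+1), Complex.log (1 + w / (z + j))
          = w * (Complex.log (z + n + 1) - Complex.log z)
            + ∑ j ∈ Finset.range (n+1), d j := by
        rw [← htel, Finset.mul_sum, ← Finset.sum_add_distrib]
        apply Finset.sum_congr rfl
        intro j _
        rw [hd]
        ring
      rw [hgdef]
      simp only []
      rw [hsum]
      ring
    -- t1 : the log correction tends to 0
    have hinv0 : Tendsto (fun n : ℕ => ((n:ℂ))⁻¹) atTop (nhds 0) :=
      tendsto_inv_atTop_nhds_zero_nat (𝕜 := ℂ)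
    have harg : Tendsto (fun n : ℕ => (z + n + 1) / n) atTop (nhds 1) := by
      have h1 : Tendsto (fun n : ℕ => (z + 1) * ((n:ℂ))⁻¹ + 1) atTop
          (nhds ((z + 1) * 0 + 1)) := (hinv0.const_mul _).add tendsto_const_nhds
      rw [mul_zero, zero_add] at h1
      apply h1.congr'
      filter_upwards [eventually_ge_atTop 1] with n hn
      have hn0 : (n:ℂ) ≠ 0 := Nat.cast_ne_zero.mpr (by omega)
      field_simp
      ring
    have ht1 : Tendsto (fun n : ℕ => Complex.log (z + n + 1) - (Real.log n : ℂ)) atTop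
        (nhds 0) := by
      have hlog : Tendsto (fun n : ℕ => Complex.log ((z + n + 1) / n)) atTop (nhds 0) := by
        have := harg.clog Complex.one_mem_slitPlane
        rwa [Complex.log_one] at this
      apply hlog.congr'
      filter_upwards [eventually_ge_atTop 1] with n hn
      have hnR : (0:ℝ) < (n:ℝ) := by exact_mod_cast (by omega : 0 < n)
      have hn0 : (n:ℂ) ≠ 0 := Nat.cast_ne_zero.mpr (by omega)
      have hznn : z + n + 1 ≠ 0 := by
        have h := hnz (n+1)
        push_cast at h
        rwa [← add_assoc] at h
      have hq : (z + n + 1) / n ≠ 0 := div_ne_zero hznn hn0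
      have hml := Complex.log_ofReal_mul hnR hq
      have he : ((n:ℝ):ℂ) * ((z + n + 1) / n) = z + n + 1 := by
        push_cast
        field_simp
      rw [he] at hml
      rw [hml]
      push_cast
      ring
    have ht2 : Tendsto (fun n : ℕ => ∑ j ∈ Finset.range (n+1), d j) atTop
        (nhds (∑' j, d j)) :=
      hsummable.hasSum.tendsto_sum_nat.comp (tendsto_add_atTop_nat 1)
    have hglim : Tendsto g atTop (nhds (-(w * Complex.log z) + ∑' j, d j)) := by
      have h := (ht1.const_mul w).add ((tendsto_const_nhds
          (x := -(w * Complex.log z)) (f := atTop)).add ht2)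
      rw [mul_zero, zero_add] at h
      exact Tendsto.congr (fun n => (hgn n).symm) h
    -- exp (g n) equals the GammaSeq ratio
    have h1wz : ∀ j : ℕ, 1 + w / (z + j) ≠ 0 := by
      intro j
      have e : 1 + w / (z + (j:ℂ)) = (z + w + j) / (z + j) := by
        field_simp [hnz j]
        ring
      rw [e]
      exact div_ne_zero (hzwj j) (hnz j)
    have hexpg : ∀ᶠ n : ℕ in atTop, Complex.exp (g n)
        = Complex.GammaSeq z n / Complex.GammaSeq (z + w) n := by
      filter_upwards [eventually_ge_atTop 1] with n hn
      have hn0 : (n:ℂ) ≠ 0 := Nat.cast_ne_zero.mpr (by omega)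
      have hfac : ((n.factorial : ℕ):ℂ) ≠ 0 := Nat.cast_ne_zero.mpr n.factorial_ne_zero
      have hczw : (n:ℂ)^(z+w) ≠ 0 := by
        simp [Complex.cpow_eq_zero_iff, hn0]
      have hprodz : ∏ j ∈ Finset.range (n+1), (z + (j:ℂ)) ≠ 0 :=
        Finset.prod_ne_zero_iff.mpr fun j _ => hnz j
      have hprodzw : ∏ j ∈ Finset.range (n+1), (z + w + (j:ℂ)) ≠ 0 :=
        Finset.prod_ne_zero_iff.mpr fun j _ => hzwj j
      have hexpw : Complex.exp (-(w * (Real.log n : ℂ))) = (n:ℂ) ^ (-w) := by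
        rw [Complex.cpow_def_of_ne_zero hn0, Complex.natCast_log]
        congr 1
        ring
      have hpow : (n:ℂ)^(-w) * (n:ℂ)^(z+w) = (n:ℂ)^z := by
        rw [← Complex.cpow_add _ _ hn0]
        congr 1
        ring
      have hprodeq : ∏ j ∈ Finset.range (n+1), (1 + w/(z+(j:ℂ)))
          = (∏ j ∈ Finset.range (n+1), (z+w+(j:ℂ))) / ∏ j ∈ Finset.range (n+1), (z+(j:ℂ)) := by
        rw [← Finset.prod_div_distrib]
        apply Finset.prod_congr rfl
        intro j _
        field_simp [hnz j]
        ring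
      rw [hgdef]
      simp only []
      rw [Complex.exp_add, Complex.exp_sum]
      have hpe : ∏ j ∈ Finset.range (n+1), Complex.exp (Complex.log (1 + w / (z + j)))
          = ∏ j ∈ Finset.range (n+1), (1 + w/(z+(j:ℂ))) :=
        Finset.prod_congr rfl fun j _ => Complex.exp_log (h1wz j)
      rw [hpe, hexpw, hprodeq, Complex.GammaSeq, Complex.GammaSeq]
      field_simp
      rw [← hpow]
    have hlim2 : Tendsto (fun n => Complex.exp (g n)) atTop
        (nhds (Complex.Gamma z / Complex.Gamma (z + w))) :=
      hP.congr' (hexpg.mono fun n h => h.symm)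
    have hlim1 : Tendsto (fun n => Complex.exp (g n)) atTop
        (nhds (Complex.exp (-(w * Complex.log z) + ∑' j, d j))) :=
      (Complex.continuous_exp.tendsto _).comp hglim
    exact tendsto_nhds_unique hlim2 hlim1

private lemma ray_norm_bound (θ : ℝ) (hθ : |θ| < Real.pi) :
    ∃ m : ℝ, 0 < m ∧ m ≤ 1 ∧ ∀ r t : ℝ, 0 ≤ r → 0 ≤ t →
      m * (r + t) ≤ ‖(r : ℂ) * Complex.exp (θ * Complex.I) + (t:ℂ)‖ := by
  have hcos : -1 < Real.cos θ := by
    have h1 : Real.cos θ = Real.cos |θ| := (Real.cos_abs θ).symm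
    rw [h1]
    have := Real.cos_lt_cos_of_nonneg_of_le_pi (abs_nonneg θ) le_rfl hθ
    simpa [Real.cos_pi] using this
  have hpos : 0 < (1 + Real.cos θ) / 2 := by linarith
  refine ⟨Real.sqrt ((1 + Real.cos θ) / 2), Real.sqrt_pos.mpr hpos, ?_, ?_⟩
  · apply Real.sqrt_le_one.mpr
    have := Real.cos_le_one θ
    linarith
  · intro r t hr ht
    set m := Real.sqrt ((1 + Real.cos θ) / 2) with hm
    have hm2 : m^2 = (1 + Real.cos θ) / 2 := Real.sq_sqrt hpos.le
    set zz : ℂ := (r : ℂ) * Complex.exp (θ * Complex.I) + (t:ℂ) with hzz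
    have hre : zz.re = r * Real.cos θ + t := by
      simp [hzz, Complex.add_re, Complex.mul_re, Complex.exp_re, Complex.exp_im,
        Complex.mul_I_re, Complex.mul_I_im]
    have him : zz.im = r * Real.sin θ := by
      simp [hzz, Complex.add_im, Complex.mul_im, Complex.exp_re, Complex.exp_im,
        Complex.mul_I_re, Complex.mul_I_im]
    have hsq : (m * (r + t))^2 ≤ ‖zz‖^2 := by
      rw [Complex.sq_norm, Complex.normSq_apply, hre, him, mul_pow, hm2]
      have hs := Real.sin_sq_add_cos_sq θ
      have hc1 := Real.cos_le_one θ
      have hs' : r * Real.sin θ * (r * Real.sin θ) = r^2 - r^2 * Real.cos θ^2 := by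
        linear_combination r^2 * hs
      have hkey : (0:ℝ) ≤ (1 - Real.cos θ) * (r - t)^2 :=
        mul_nonneg (by linarith) (sq_nonneg _)
      nlinarith [hkey, hs']
    have h0 : 0 ≤ m * (r + t) := by positivity
    calc m * (r + t) = Real.sqrt ((m * (r+t))^2) := (Real.sqrt_sq h0).symm
      _ ≤ Real.sqrt (‖zz‖^2) := Real.sqrt_le_sqrt hsq
      _ = ‖zz‖ := Real.sqrt_sq (norm_nonneg _)

/-- For fixed complex `b`, `c`, the ratio `a^(c-b) * Γ(a+b) / Γ(a+c)` tends to `1`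
as `a → ∞` along any fixed ray `arg a = θ` with `|θ| < π`. -/
theorem gamma_ratio_tendsto_one (b c : ℂ) (θ : ℝ) (hθ : |θ| < Real.pi) :
    Tendsto (fun r : ℝ =>
        ((r : ℂ) * Complex.exp (θ * Complex.I)) ^ (c - b) *
          Complex.Gamma ((r : ℂ) * Complex.exp (θ * Complex.I) + b) /
          Complex.Gamma ((r : ℂ) * Complex.exp (θ * Complex.I) + c))
      atTop (nhds 1) := by
  obtain ⟨m, hm0, hm1, hkey⟩ := ray_norm_bound θ hθ
  set w : ℂ := c - b with hw
  set A : ℝ → ℂ := fun r => (r : ℂ) * Complex.exp (θ * Complex.I) with hA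
  set T : ℝ → ℂ := fun r => ∑' j : ℕ, (Complex.log (1 + w / (A r + b + j))
      - w * (Complex.log (A r + b + j + 1) - Complex.log (A r + b + j))) with hT
  have hR : ∀ᶠ r : ℝ in atTop,
      2 ≤ r ∧ 2 * ‖w‖ + 2 ≤ m / 2 * r ∧ ‖b‖ ≤ m / 2 * r := by
    filter_upwards [eventually_ge_atTop (2:ℝ),
      eventually_ge_atTop ((2*‖w‖+2) * (2/m)), eventually_ge_atTop (‖b‖ * (2/m))]
      with r h1 h2 h3
    have hq1 : m / 2 * ((2*‖w‖+2) * (2/m)) = 2*‖w‖+2 := by field_simp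
    have hq2 : m / 2 * (‖b‖ * (2/m)) = ‖b‖ := by field_simp
    refine ⟨h1, ?_, ?_⟩
    · calc 2*‖w‖+2 = m / 2 * ((2*‖w‖+2) * (2/m)) := hq1.symm
        _ ≤ m / 2 * r := by
          apply mul_le_mul_of_nonneg_left h2 (by linarith)
    · calc ‖b‖ = m / 2 * (‖b‖ * (2/m)) := hq2.symm
        _ ≤ m / 2 * r := by
          apply mul_le_mul_of_nonneg_left h3 (by linarith)
  have hmain : ∀ᶠ r : ℝ in atTop,
      (A r ^ w * Complex.Gamma (A r + b) / Complex.Gamma (A r + c)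
        = Complex.exp (w * (Complex.log (A r) - Complex.log (A r + b)) + T r))
      ∧ ‖T r‖ ≤ (‖w‖^2 + ‖w‖) / ((m/2)^2 * (r - 1))
      ∧ A r + b ≠ 0 := by
    filter_upwards [hR] with r hr
    obtain ⟨hr2, hrw, hrb⟩ := hr
    have hr0 : (0:ℝ) < r := by linarith
    have hlin : ∀ j : ℕ, m / 2 * (r + j) ≤ ‖A r + b + (j:ℂ)‖ := by
      intro j
      have hj0 : (0:ℝ) ≤ (j:ℝ) := j.cast_nonneg
      have k1 : m * (r + j) ≤ ‖A r + (j:ℂ)‖ := by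
        have h := hkey r j hr0.le hj0
        push_cast at h
        exact h
      have k2 : ‖A r + (j:ℂ)‖ ≤ ‖A r + b + (j:ℂ)‖ + ‖b‖ := by
        calc ‖A r + (j:ℂ)‖ = ‖(A r + b + j) - b‖ := by congr 1; ring
          _ ≤ ‖A r + b + (j:ℂ)‖ + ‖b‖ := norm_sub_le _ _
      have hbj : ‖b‖ ≤ m / 2 * (r + j) := by
        calc ‖b‖ ≤ m / 2 * r := hrb
          _ ≤ m / 2 * (r + j) := by nlinarith
      linarith
    obtain ⟨hTb, hEq⟩ := gamma_ratio_eq_exp w (A r + b) (m/2) r (half_pos hm0) hr2 hrw hlin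
    have hzweq : A r + b + w = A r + c := by rw [hw]; ring
    rw [hzweq] at hEq
    have hAb0 : A r + b ≠ 0 := by
      intro h
      have h5 := hlin 0
      simp only [Nat.cast_zero, add_zero] at h5
      rw [h, norm_zero] at h5
      nlinarith
    refine ⟨?_, hTb, hAb0⟩
    have hA0 : A r ≠ 0 := by
      rw [hA]
      simp only []
      apply mul_ne_zero _ (Complex.exp_ne_zero _)
      exact_mod_cast hr0.ne'
    calc A r ^ w * Complex.Gamma (A r + b) / Complex.Gamma (A r + c)
        = A r ^ w * (Complex.Gamma (A r + b) / Complex.Gamma (A r + c)) := by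
          rw [mul_div_assoc]
      _ = Complex.exp (Complex.log (A r) * w)
            * Complex.exp (-(w * Complex.log (A r + b)) + T r) := by
          rw [Complex.cpow_def_of_ne_zero hA0, hEq]
      _ = Complex.exp (Complex.log (A r) * w + (-(w * Complex.log (A r + b)) + T r)) :=
          (Complex.exp_add _ _).symm
      _ = Complex.exp (w * (Complex.log (A r) - Complex.log (A r + b)) + T r) := by
          congr 1; ring
  -- part 1 : log difference tends to zero
  have hslit : Complex.exp ((θ:ℂ) * Complex.I) ∈ Complex.slitPlane := by
    rw [Complex.mem_slitPlane_iff]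
    by_cases hs : Real.sin θ = 0
    · left
      have hθ0 : θ = 0 := by
        have h1 : -Real.pi < θ := (abs_lt.mp hθ).1
        have h2 : θ < Real.pi := (abs_lt.mp hθ).2
        rcases Real.sin_eq_zero_iff.mp hs with ⟨n, hn⟩
        have habs : |(n:ℝ)| * Real.pi < Real.pi := by
          calc |(n:ℝ)| * Real.pi = |(n:ℝ) * Real.pi| := by
                rw [abs_mul, abs_of_pos Real.pi_pos]
            _ = |θ| := by rw [hn]
            _ < Real.pi := hθ
        have hn1 : |(n:ℝ)| < 1 := by nlinarith [Real.pi_pos, abs_nonneg ((n:ℝ))]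
        have hn1' : |n| < 1 := by exact_mod_cast hn1
        have hn0 : n = 0 := by have := abs_lt.mp hn1'; omega
        rw [hn0] at hn
        simpa using hn.symm
      rw [hθ0]
      norm_num
    · right
      have : (Complex.exp ((θ:ℂ) * Complex.I)).im = Real.sin θ := by
        simp [Complex.exp_im]
      rw [this]
      exact hs
  have hb0 : Tendsto (fun r : ℝ => b / (r:ℂ)) atTop (nhds 0) := by
    have h1 : Tendsto (fun r : ℝ => ((r:ℂ))⁻¹) atTop (nhds 0) := by
      rw [tendsto_zero_iff_norm_tendsto_zero]
      have h2 : Tendsto (fun r : ℝ => r⁻¹) atTop (nhds 0) := tendsto_inv_atTop_zero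
      apply h2.congr'
      filter_upwards [eventually_ge_atTop (0:ℝ)] with r hr
      rw [norm_inv, Complex.norm_real, Real.norm_eq_abs, _root_.abs_of_nonneg hr]
    have := h1.const_mul b
    rw [mul_zero] at this
    apply this.congr
    intro r
    rw [div_eq_mul_inv]
  have part1 : Tendsto (fun r : ℝ => Complex.log (A r) - Complex.log (A r + b))
      atTop (nhds 0) := by
    have hcont : Tendsto (fun r : ℝ => Complex.log (Complex.exp ((θ:ℂ) * Complex.I) + b / r))
        atTop (nhds (Complex.log (Complex.exp ((θ:ℂ) * Complex.I)))) := by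
      apply Filter.Tendsto.clog _ hslit
      have := tendsto_const_nhds (x := Complex.exp ((θ:ℂ) * Complex.I)) (f := atTop (α := ℝ))
      have h3 := this.add hb0
      rw [add_zero] at h3
      exact h3
    have h4 := (tendsto_const_nhds
        (x := Complex.log (Complex.exp ((θ:ℂ) * Complex.I))) (f := atTop (α := ℝ))).sub hcont
    rw [sub_self] at h4
    apply h4.congr'
    filter_upwards [hmain, eventually_gt_atTop (0:ℝ)] with r hr hr0
    obtain ⟨_, _, hAb0⟩ := hr
    have hrc : (r:ℂ) ≠ 0 := by exact_mod_cast hr0.ne'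
    have hexpne : Complex.exp ((θ:ℂ) * Complex.I) ≠ 0 := Complex.exp_ne_zero _
    have hq : Complex.exp ((θ:ℂ) * Complex.I) + b / r ≠ 0 := by
      intro h
      apply hAb0
      have : A r + b = (r:ℂ) * (Complex.exp ((θ:ℂ) * Complex.I) + b / r) := by
        rw [hA]; field_simp
      rw [this, h, mul_zero]
    have e1 : Complex.log (A r) = Real.log r + Complex.log (Complex.exp ((θ:ℂ) * Complex.I)) := by
      rw [hA]
      exact Complex.log_ofReal_mul hr0 hexpne
    have e2 : Complex.log (A r + b)
        = Real.log r + Complex.log (Complex.exp ((θ:ℂ) * Complex.I) + b / r) := by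
      have : A r + b = (r:ℂ) * (Complex.exp ((θ:ℂ) * Complex.I) + b / r) := by
        rw [hA]; field_simp
      rw [this]
      exact Complex.log_ofReal_mul hr0 hq
    rw [e1, e2]
    ring
  -- part 2 : T tends to zero
  have part2 : Tendsto T atTop (nhds 0) := by
    have h1 : Tendsto (fun r : ℝ => r - 1) atTop atTop :=
      (tendsto_atTop_add_const_right atTop (-1) tendsto_id).congr (fun x => by simp only [id_eq]; ring)
    have h2 := h1.inv_tendsto_atTop
    have h3 := h2.const_mul ((‖w‖^2 + ‖w‖) / (m/2)^2)
    rw [mul_zero] at h3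
    have h4 : Tendsto (fun r : ℝ => (‖w‖^2 + ‖w‖) / ((m/2)^2 * (r - 1))) atTop (nhds 0) := by
      apply h3.congr
      intro r
      simp only [Pi.inv_apply]
      rw [eq_comm, div_eq_mul_inv, mul_inv, div_eq_mul_inv]
      ring
    apply squeeze_zero_norm' _ h4
    filter_upwards [hmain] with r hr
    exact hr.2.1
  -- assemble
  have hg : Tendsto (fun r : ℝ => w * (Complex.log (A r) - Complex.log (A r + b)) + T r)
      atTop (nhds 0) := by
    have := (part1.const_mul w).add part2
    rw [mul_zero, add_zero] at this
    exact this
  have hfin : Tendsto (fun r : ℝ =>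
      Complex.exp (w * (Complex.log (A r) - Complex.log (A r + b)) + T r)) atTop (nhds 1) := by
    have := (Complex.continuous_exp.tendsto 0).comp hg
    rw [Complex.exp_zero] at this
    exact this
  apply hfin.congr'
  filter_upwards [hmain] with r hr
  exact hr.1.symm
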